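/- Fix p > 1 and let U_p(s) := (s^p − p(s−1) − 1)/(p(p−1)). Then for all r, t > 0, inf_{θ>0} [ Û_p(θ, r) + Û_p(θ, t) ] = (1/p) [ r + t − 2^{p/(p−1)} ( r^{1−p} + t^{1−p} )^{1/(1−p)} ], where Û_p(θ,s) := s·U_p(θ/s) is the perspective function of U_p. -/

import Mathlib

open Real

/-- The power-like entropy `U_p(s) = (s^p − p(s−1) − 1)/(p(p−1))` (with real exponent). -/
noncomputable def Upfun (p s : ℝ) : ℝ := (s ^ p - p * (s - 1) - 1) / (p * (p - 1))

/-- For `p > 1` and all `r, t > 0`,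
`inf_{θ>0} [Û_p(θ,r) + Û_p(θ,t)]
  = (1/p)·[ r + t − 2^{p/(p−1)} (r^{1−p} + t^{1−p})^{1/(1−p)} ]`,
where `Û_p(θ,s) = s·U_p(θ/s)` is the perspective function of `U_p`. -/
theorem marginalPerspective_Up (p : ℝ) (hp : 1 < p) (r t : ℝ) (hr : 0 < r) (ht : 0 < t) :
    (⨅ θ : {θ : ℝ // 0 < θ},
        (r * Upfun p ((θ : ℝ) / r) + t * Upfun p ((θ : ℝ) / t))) =
      (1 / p) * (r + t - 2 ^ (p / (p - 1)) *
        (r ^ (1 - p) + t ^ (1 - p)) ^ (1 / (1 - p))) := by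
  have hp0 : (0:ℝ) < p := lt_trans one_pos hp
  have hp1 : (0:ℝ) < p - 1 := sub_pos.2 hp
  set A : ℝ := r ^ (1 - p) + t ^ (1 - p) with hA
  have hA0 : 0 < A := by
    have := Real.rpow_pos_of_pos hr (1 - p)
    have := Real.rpow_pos_of_pos ht (1 - p)
    positivity
  set c : ℝ := (2 / A) ^ (1 / (p - 1)) with hc
  have hc0 : 0 < c := Real.rpow_pos_of_pos (by positivity) _
  have hc1 : c ^ (p - 1) = 2 / A := by
    rw [hc, ← Real.rpow_mul (by positivity : (0:ℝ) ≤ 2 / A),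
      div_mul_cancel₀ _ hp1.ne', Real.rpow_one]
  have hcp : c ^ p = c * c ^ (p - 1) := by
    rw [show c * c ^ (p - 1) = c ^ (1 + (p - 1)) by
      rw [Real.rpow_add hc0, Real.rpow_one]]
    congr 1; ring
  -- value form of the objective
  have hval : ∀ θ : ℝ, 0 < θ →
      r * Upfun p (θ / r) + t * Upfun p (θ / t)
        = (θ ^ p * A - 2 * p * θ + (p - 1) * (r + t)) / (p * (p - 1)) := by
    intro θ hθ
    have hrp : (0:ℝ) < r ^ p := Real.rpow_pos_of_pos hr p
    have htp : (0:ℝ) < t ^ p := Real.rpow_pos_of_pos ht p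
    rw [Upfun, Upfun, Real.div_rpow hθ.le hr.le, Real.div_rpow hθ.le ht.le, hA,
      Real.rpow_sub hr, Real.rpow_sub ht, Real.rpow_one, Real.rpow_one]
    field_simp
    ring
  -- key minimality inequality
  have key : ∀ θ : ℝ, 0 < θ → c ^ p * A - 2 * p * c ≤ θ ^ p * A - 2 * p * θ := by
    intro θ hθ
    have hs : -1 ≤ θ / c - 1 := by
      have : 0 ≤ θ / c := by positivity
      linarith
    have bern := one_add_mul_self_le_rpow_one_add hs hp.le
    rw [add_sub_cancel] at bern
    have hmul := mul_le_mul_of_nonneg_left bern (Real.rpow_pos_of_pos hc0 p).le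
    rw [Real.div_rpow hθ.le hc0.le] at hmul
    have hcpne : (0:ℝ) < c ^ p := Real.rpow_pos_of_pos hc0 p
    have hθp : c ^ p * (θ ^ p / c ^ p) = θ ^ p := by field_simp
    rw [hθp] at hmul
    -- c^p * (1 + p * (θ/c - 1)) ≤ θ^p
    have hexp : c ^ p * (1 + p * (θ / c - 1)) = c ^ p + p * c ^ (p - 1) * (θ - c) := by
      rw [hcp]; field_simp
    rw [hexp] at hmul
    -- multiply by A and use c^(p-1) * A = 2
    have h2 : c ^ (p - 1) * A = 2 := by rw [hc1]; field_simp
    have h3 : (c ^ p + p * c ^ (p - 1) * (θ - c)) * A = c ^ p * A + 2 * p * (θ - c) := by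
      rw [show (c ^ p + p * c ^ (p - 1) * (θ - c)) * A
          = c ^ p * A + p * (c ^ (p - 1) * A) * (θ - c) by ring, h2]
      ring
    have h4 := mul_le_mul_of_nonneg_right hmul hA0.le
    rw [h3] at h4
    linarith
  set v : ℝ := (c ^ p * A - 2 * p * c + (p - 1) * (r + t)) / (p * (p - 1)) with hv
  have hlow : ∀ θ : {θ : ℝ // 0 < θ},
      v ≤ r * Upfun p ((θ : ℝ) / r) + t * Upfun p ((θ : ℝ) / t) := by
    intro θ
    rw [hval θ θ.2, hv]
    exact (div_le_div_iff_of_pos_right (by positivity)).mpr (add_le_add (key θ θ.2) le_rfl)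
  have hbdd : BddBelow (Set.range fun θ : {θ : ℝ // 0 < θ} =>
      r * Upfun p ((θ : ℝ) / r) + t * Upfun p ((θ : ℝ) / t)) :=
    ⟨v, by rintro x ⟨θ, rfl⟩; exact hlow θ⟩
  have h1 := ciInf_le hbdd ⟨c, hc0⟩
  have h2 := le_ciInf hlow
  have h3 : r * Upfun p (c / r) + t * Upfun p (c / t) = v := hval c hc0
  have hinf : (⨅ θ : {θ : ℝ // 0 < θ},
      (r * Upfun p ((θ : ℝ) / r) + t * Upfun p ((θ : ℝ) / t))) = v :=
    le_antisymm (h3 ▸ h1) h2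
  rw [hinf]
  -- compute v in closed form
  have hc2 : 2 ^ (p / (p - 1)) * A ^ (1 / (1 - p)) = 2 * c := by
    rw [hc, Real.div_rpow (by norm_num) hA0.le,
      show (1:ℝ) / (1 - p) = -(1 / (p - 1)) by rw [show (1:ℝ) - p = -(p - 1) by ring, one_div, one_div, inv_neg],
      Real.rpow_neg hA0.le,
      show p / (p - 1) = 1 + 1 / (p - 1) by field_simp; ring,
      Real.rpow_add (by norm_num : (0:ℝ) < 2), Real.rpow_one]
    ring
  have hcpA : c ^ p * A = 2 * c := by
    rw [hcp, hc1]; field_simp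
  rw [hc2, hv, hcpA]
  field_simp
  ring
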